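/- Let K be a field of characteristic 2, let a₀, a₁, a₂ ∈ K and F(w) = a₀ + a₁·w + a₂·w². Let βᵢ, βⱼ, βₖ ∈ K be pairwise distinct and set Zᵢ = F(βᵢ), Zⱼ = F(βⱼ), Zₖ = F(βₖ). Then a₁ + a₂ = [ (βⱼ + βₖ + 1)(βₖ + βⱼ)·Zᵢ + (βᵢ + βₖ + 1)(βᵢ + βₖ)·Zⱼ + (βᵢ + βⱼ + 1)(βⱼ + βᵢ)·Zₖ ] / [ (βᵢ + βⱼ)(βᵢ + βₖ)(βⱼ + βₖ) ] (all additions are in K, where subtraction coincides with addition since char K = 2). -/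
import Mathlib

/-- Reconstruction formula (Case 1) for the conventional 3-threshold scheme:
in characteristic 2, three shares at pairwise distinct points recover `a₁ + a₂`. -/
theorem stmt_1 {K : Type*} [Field K] [CharP K 2] (a₀ a₁ a₂ : K)
    (F : K → K) (hF : ∀ w, F w = a₀ + a₁ * w + a₂ * w ^ 2)
    (βi βj βk : K) (hij : βi ≠ βj) (hik : βi ≠ βk) (hjk : βj ≠ βk)
    (Zi Zj Zk : K) (hZi : Zi = F βi) (hZj : Zj = F βj) (hZk : Zk = F βk) :
    a₁ + a₂ =
      ((βj + βk + 1) * (βk + βj) * Zi + (βi + βk + 1) * (βi + βk) * Zj +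
        (βi + βj + 1) * (βj + βi) * Zk) /
      ((βi + βj) * (βi + βk) * (βj + βk)) := by
  have h2 : (2 : K) = 0 := by exact_mod_cast CharP.cast_eq_zero K 2
  have d1 : βi + βj ≠ 0 := fun h => hij (by linear_combination h - h2 * βj)
  have d2 : βi + βk ≠ 0 := fun h => hik (by linear_combination h - h2 * βk)
  have d3 : βj + βk ≠ 0 := fun h => hjk (by linear_combination h - h2 * βk)
  subst hZi hZj hZk
  rw [hF, hF, hF]
  field_simp
  ring_nf
  linear_combination (-(a₁*βi*βj) - a₁*βi*βj*βk*2 - a₁*βi*βk - a₁*βj*βk + βi*βj*βk*a₂ - βi*βj*βk^2*a₂ - βi*βj*a₀ - βi*βj^2*βk*a₂ - βi*βk*a₀ - βi*a₀ - βi^2*βj*βk*a₂ - βi^2*βj^2*a₂ - βi^2*βk^2*a₂ - βi^2*a₀ - βj*βk*a₀ - βj*a₀ - βj^2*βk^2*a₂ - βj^2*a₀ - βk*a₀ - βk^2*a₀) * h2
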